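/- Let P be a probability measure on Z and let S = (z_1,…,z_n) be drawn i.i.d. from P (i.e., S ∼ P^⊗n) with n ≥ 2. Then for any δ ∈ (0,1), with probability at least 1 − δ over the draw of S, one has R_exp(P) ≤ R_emp(S) + sqrt(2·ln(1/δ)/n). -/

import Mathlib

open MeasureTheory Real Finset

/-- Analytic core of Hoeffding's lemma, for `[0,1]`-valued variables and `c ≥ 0`. -/
lemma hoeff_core (p : ℝ) (hp0 : 0 ≤ p) (hp1 : p ≤ 1) (c : ℝ) (hc : 0 ≤ c) :
    1 - p + p * exp (-c) ≤ exp (-(c * p) + c ^ 2 / 8) := by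
  set u : ℝ → ℝ := fun x => 1 - p + p * exp (-x) with hu_def
  have hu_pos : ∀ x, 0 < u x := by
    intro x
    rcases eq_or_lt_of_le hp0 with h | h
    · simp [hu_def, ← h]
    · have := exp_pos (-x)
      have : 0 < p * exp (-x) := mul_pos h this
      simp only [hu_def]
      nlinarith
  have hu_deriv : ∀ x, HasDerivAt u (-(p * exp (-x))) x := by
    intro x
    have h1 : HasDerivAt (fun x : ℝ => exp (-x)) (-exp (-x)) x := by
      simpa using (hasDerivAt_neg x).exp
    have := (h1.const_mul p).const_add (1 - p)
    exact this.congr_deriv (by ring)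
  set g : ℝ → ℝ := fun x => x ^ 2 / 8 - x * p - log (u x) with hg_def
  set g' : ℝ → ℝ := fun x => x / 4 - p + p * exp (-x) / u x with hg'_def
  have hg_deriv : ∀ x, HasDerivAt g (g' x) x := by
    intro x
    have h1 : HasDerivAt (fun x : ℝ => x ^ 2 / 8 - x * p) (x / 4 - p) x := by
      have := ((hasDerivAt_pow 2 x).div_const 8).sub ((hasDerivAt_id x).mul_const p)
      exact this.congr_deriv (by ring)
    have h2 : HasDerivAt (fun x => log (u x)) (-(p * exp (-x)) / u x) x :=
      (hu_deriv x).log (hu_pos x).ne'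
    exact (h1.sub h2).congr_deriv (by simp only [hg'_def]; ring)
  have hg'_deriv : ∀ x, HasDerivAt g'
      (1 / 4 - p * exp (-x) * (1 - p) / (u x) ^ 2) x := by
    intro x
    have h1 : HasDerivAt (fun x : ℝ => p * exp (-x)) (-(p * exp (-x))) x := by
      have : HasDerivAt (fun x : ℝ => exp (-x)) (-exp (-x)) x := by
        simpa using (hasDerivAt_neg x).exp
      simpa [mul_comm, mul_left_comm] using this.const_mul p
    have h2 : HasDerivAt (fun x => p * exp (-x) / u x)
        ((-(p * exp (-x)) * u x - p * exp (-x) * (-(p * exp (-x)))) / (u x) ^ 2) x :=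
      h1.div (hu_deriv x) (hu_pos x).ne'
    have h3 : HasDerivAt (fun x : ℝ => x / 4 - p) (1 / 4) x := by
      simpa using ((hasDerivAt_id x).div_const 4).sub_const p
    have := h3.add h2
    refine this.congr_deriv ?_
    have hux : u x = 1 - p + p * exp (-x) := rfl
    have hu0 := (hu_pos x).ne'
    field_simp
    rw [hux]
    ring
  have hg''_nonneg : ∀ x, 0 ≤ 1 / 4 - p * exp (-x) * (1 - p) / (u x) ^ 2 := by
    intro x
    have hux : u x = (1 - p) + p * exp (-x) := rfl
    have h1 : 0 < (u x) ^ 2 := pow_pos (hu_pos x) 2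
    rw [sub_nonneg, div_le_iff₀ h1, hux]
    nlinarith [sq_nonneg ((1 - p) - p * exp (-x)), exp_pos (-x), mul_nonneg hp0 (exp_pos (-x)).le]
  have hg'_mono : Monotone g' := by
    apply monotone_of_deriv_nonneg
    · exact fun x => (hg'_deriv x).differentiableAt
    · intro x
      rw [(hg'_deriv x).deriv]
      exact hg''_nonneg x
  have hg'0 : g' 0 = 0 := by
    simp [hg'_def, hu_def]
  have hg'_nonneg : ∀ x ∈ Set.Ici (0:ℝ), 0 ≤ g' x := fun x hx => hg'0 ▸ hg'_mono hx
  have hg_mono : MonotoneOn g (Set.Ici (0:ℝ)) := by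
    apply monotoneOn_of_deriv_nonneg (convex_Ici 0)
    · exact fun x hx => ((hg_deriv x).continuousAt).continuousWithinAt
    · exact fun x hx => ((hg_deriv x).differentiableAt).differentiableWithinAt
    · intro x hx
      rw [(hg_deriv x).deriv]
      exact hg'_nonneg x (interior_subset hx)
  have hg0 : g 0 = 0 := by
    simp [hg_def, hu_def]
  have hgc : 0 ≤ g c := hg0 ▸ hg_mono (Set.mem_Ici.2 le_rfl) hc hc
  have hlog : log (u c) ≤ -(c * p) + c ^ 2 / 8 := by
    simp only [hg_def] at hgc
    linarith
  calc u c = exp (log (u c)) := (exp_log (hu_pos c)).symm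
    _ ≤ exp (-(c * p) + c ^ 2 / 8) := exp_le_exp.2 hlog


lemma bdd_integrable {Ω : Type*} [MeasurableSpace Ω] {Q : Measure Ω} [IsFiniteMeasure Q]
    {f : Ω → ℝ} (hm : AEStronglyMeasurable f Q) {a b : ℝ}
    (h1 : ∀ ω, a ≤ f ω) (h2 : ∀ ω, f ω ≤ b) : Integrable f Q := by
  refine (integrable_const (max |a| |b|)).mono' hm (Filter.Eventually.of_forall fun ω => ?_)
  rw [Real.norm_eq_abs]
  rcases abs_le.mp (le_refl |f ω|) with _
  rw [abs_le]
  constructor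
  · calc -max |a| |b| ≤ -|a| := by simp [neg_le_neg_iff, le_max_left]
      _ ≤ a := neg_abs_le a
      _ ≤ f ω := h1 ω
  · exact (h2 ω).trans ((le_abs_self b).trans (le_max_right _ _))

lemma hoeff_mgf {Ω : Type*} [MeasurableSpace Ω] (Q : Measure Ω) [IsProbabilityMeasure Q]
    (X : Ω → ℝ) (hX : Measurable X) (h0 : ∀ ω, 0 ≤ X ω) (h1 : ∀ ω, X ω ≤ 1)
    (c : ℝ) (hc : 0 ≤ c) :
    ∫ ω, exp (c * ((∫ ω', X ω' ∂Q) - X ω)) ∂Q ≤ exp (c ^ 2 / 8) := by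
  set p : ℝ := ∫ ω', X ω' ∂Q with hp_def
  have hXint : Integrable X Q := bdd_integrable hX.aestronglyMeasurable h0 h1
  have hp0 : 0 ≤ p := integral_nonneg h0
  have hp1 : p ≤ 1 := by
    calc p ≤ ∫ _ω', (1:ℝ) ∂Q := integral_mono hXint (integrable_const 1) h1
      _ = 1 := by simp
  have key : ∀ ω, exp (-(c * X ω)) ≤ 1 - X ω + X ω * exp (-c) := by
    intro ω
    have := convexOn_exp.2 (Set.mem_univ (0:ℝ)) (Set.mem_univ (-c))
      (sub_nonneg.2 (h1 ω)) (h0 ω) (by ring)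
    simpa [smul_eq_mul, mul_comm] using this
  have hmeas : Measurable fun ω => exp (-(c * X ω)) := (hX.const_mul c).neg.exp
  have hint1 : Integrable (fun ω => exp (-(c * X ω))) Q := by
    refine bdd_integrable hmeas.aestronglyMeasurable (a := 0) (b := 1)
      (fun ω => (exp_pos _).le) (fun ω => ?_)
    rw [← Real.exp_zero]
    exact exp_le_exp.2 (by nlinarith [h0 ω])
  have hint2 : Integrable (fun ω => 1 - X ω + X ω * exp (-c)) Q :=
    ((integrable_const 1).sub hXint).add (hXint.mul_const _)
  have step1 : ∫ ω, exp (-(c * X ω)) ∂Q ≤ 1 - p + p * exp (-c) := by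
    calc ∫ ω, exp (-(c * X ω)) ∂Q ≤ ∫ ω, (1 - X ω + X ω * exp (-c)) ∂Q :=
          integral_mono hint1 hint2 key
      _ = 1 - p + p * exp (-c) := by
          have : (fun ω => 1 - X ω + X ω * exp (-c)) =
              fun ω => 1 + (exp (-c) - 1) * X ω := by funext ω; ring
          rw [this, integral_add (integrable_const 1) (hXint.const_mul _),
            MeasureTheory.integral_const_mul]
          simp only [integral_const, probReal_univ, smul_eq_mul, one_mul,
            ← hp_def]
          ring
  have expand : ∀ ω, exp (c * (p - X ω)) = exp (c * p) * exp (-(c * X ω)) := by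
    intro ω
    rw [← Real.exp_add]
    ring_nf
  calc ∫ ω, exp (c * (p - X ω)) ∂Q = exp (c * p) * ∫ ω, exp (-(c * X ω)) ∂Q := by
        simp_rw [expand]; rw [integral_const_mul]
    _ ≤ exp (c * p) * (1 - p + p * exp (-c)) := by
        exact mul_le_mul_of_nonneg_left step1 (exp_pos _).le
    _ ≤ exp (c * p) * exp (-(c * p) + c ^ 2 / 8) :=
        mul_le_mul_of_nonneg_left (hoeff_core p hp0 hp1 c hc) (exp_pos _).le
    _ = exp (c ^ 2 / 8) := by rw [← Real.exp_add]; ring_nf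


lemma prod_pairs {Z : Type*} [MeasurableSpace Z] (P : Measure Z) [IsProbabilityMeasure P]
    (m r : ℕ) (f : Z → Z → ℝ) (hf : Measurable (Function.uncurry f))
    {B : ℝ} (hf0 : ∀ z z', 0 ≤ f z z') (hfB : ∀ z z', f z z' ≤ B) :
    ∫ T : ((Fin m ⊕ Fin m) ⊕ Fin r) → Z,
        (∏ k : Fin m, f (T (Sum.inl (Sum.inl k))) (T (Sum.inl (Sum.inr k))))
        ∂(Measure.pi fun _ => P)
      = (∫ z, ∫ z', f z z' ∂P ∂P) ^ m := by
  letI : MeasureSpace Z := { volume := P }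
  haveI : Nonempty Z := by
    by_contra h
    rw [not_nonempty_iff] at h
    have h1 := measure_univ (μ := P)
    rw [Set.univ_eq_empty_iff.mpr h] at h1
    simp at h1
  have hB : 0 ≤ B := (hf0 Classical.ofNonempty Classical.ofNonempty).trans
      (hfB Classical.ofNonempty Classical.ofNonempty)
  -- Step A : split off the `Fin r` coordinates
  rw [← (measurePreserving_sumPiEquivProdPi_symm
      (μ := fun _ : (Fin m ⊕ Fin m) ⊕ Fin r => P)).integral_comp']
  simp only [MeasurableEquiv.coe_sumPiEquivProdPi_symm, Equiv.sumPiEquivProdPi_symm_apply]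
  -- Step B : drop the second component
  have stepB := integral_prod_mul (μ := (Measure.pi fun _ : Fin m ⊕ Fin m => P))
      (ν := (Measure.pi fun _ : Fin r => P))
      (f := fun u : Fin m ⊕ Fin m → Z => ∏ k : Fin m, f (u (Sum.inl k)) (u (Sum.inr k)))
      (g := fun _ : Fin r → Z => (1:ℝ))
  simp only [integral_const, probReal_univ, one_smul, mul_one] at stepB
  rw [stepB]
  -- Step C : split the two halves
  rw [← (measurePreserving_sumPiEquivProdPi_symm
      (μ := fun _ : Fin m ⊕ Fin m => P)).integral_comp']
  simp only [MeasurableEquiv.coe_sumPiEquivProdPi_symm, Equiv.sumPiEquivProdPi_symm_apply]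
  -- Step D : Fubini
  have hmeas : Measurable fun (x : (Fin m → Z) × (Fin m → Z)) =>
      ∏ k : Fin m, f (x.1 k) (x.2 k) := by
    apply Finset.measurable_prod
    intro k _
    exact hf.comp (Measurable.prodMk measurable_fst.eval measurable_snd.eval)
  have hint : Integrable (fun (x : (Fin m → Z) × (Fin m → Z)) =>
      ∏ k : Fin m, f (x.1 k) (x.2 k))
      ((Measure.pi fun _ => P).prod (Measure.pi fun _ => P)) := by
    refine bdd_integrable hmeas.aestronglyMeasurable (a := 0) (b := B ^ m)
      (fun x => Finset.prod_nonneg fun k _ => hf0 _ _) (fun x => ?_)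
    calc ∏ k : Fin m, f (x.1 k) (x.2 k) ≤ ∏ _k : Fin m, B :=
          Finset.prod_le_prod (fun k _ => hf0 _ _) (fun k _ => hfB _ _)
      _ = B ^ m := by simp
  rw [integral_prod _ hint]
  -- Step E+F : iterated application of Fubini-in-n-variables
  have volZ : (volume : Measure Z) = P := rfl
  have volpi : (volume : Measure (Fin m → Z)) = Measure.pi fun _ => P := by
    rw [volume_pi]; rfl
  have inner : ∀ x : Fin m → Z,
      (∫ y : Fin m → Z, ∏ k : Fin m, f (x k) (y k) ∂(Measure.pi fun _ => P))
        = ∏ k : Fin m, ∫ z', f (x k) z' ∂P := by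
    intro x
    rw [← volpi]
    exact integral_fin_nat_prod_eq_prod (fun k z => f (x k) z)
  simp_rw [inner]
  rw [show (fun x : Fin m → Z => ∏ k : Fin m, ∫ z', f (x k) z' ∂P)
      = fun x : Fin m → Z => ∏ k : Fin m, (fun z => ∫ z', f z z' ∂P) (x k) from rfl]
  rw [integral_fin_nat_prod_eq_prod (fun _ z => ∫ z', f z z' ∂P)]
  simp [volZ]


lemma exists_pair_perm {α : Type*} [DecidableEq α] {a b a' b' : α} (hab : a ≠ b)
    (hab' : a' ≠ b') : ∃ τ : Equiv.Perm α, τ a = a' ∧ τ b = b' := by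
  set w := Equiv.swap a a' b with hw_def
  have hw : a' ≠ w := by
    intro h
    apply hab
    have := congrArg (Equiv.swap a a') h
    rw [Equiv.swap_apply_right, hw_def, Equiv.swap_apply_self] at this
    exact this
  refine ⟨(Equiv.swap a a').trans (Equiv.swap w b'), ?_, ?_⟩
  · rw [Equiv.trans_apply, Equiv.swap_apply_left,
      Equiv.swap_apply_of_ne_of_ne hw hab']
  · rw [Equiv.trans_apply, ← hw_def, Equiv.swap_apply_left]

/-- All fibers `{σ | σ a = i, σ b = j}` (for `i ≠ j`) have the same cardinality. -/
lemma fib_card_eq {n : ℕ} {a b i j i' j' : Fin n} (hij : i ≠ j) (hij' : i' ≠ j') :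
    (univ.filter fun σ : Equiv.Perm (Fin n) => σ a = i ∧ σ b = j).card
      = (univ.filter fun σ : Equiv.Perm (Fin n) => σ a = i' ∧ σ b = j').card := by
  obtain ⟨τ, h1, h2⟩ := exists_pair_perm hij hij'
  apply Finset.card_bij' (fun σ _ => τ * σ) (fun σ _ => τ⁻¹ * σ)
  · intro σ hσ
    simp only [mem_filter, mem_univ, true_and] at hσ ⊢
    rw [Equiv.Perm.mul_apply, Equiv.Perm.mul_apply, hσ.1, hσ.2]
    exact ⟨h1, h2⟩
  · intro σ hσ
    simp only [mem_filter, mem_univ, true_and] at hσ ⊢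
    rw [Equiv.Perm.mul_apply, Equiv.Perm.mul_apply, hσ.1, hσ.2]
    constructor
    · rw [← h1]; simp
    · rw [← h2]; simp
  · intro σ _; group
  · intro σ _; group

/-- Key combinatorial identity for symmetrization of U-statistics. -/
lemma sum_perm_pair {n : ℕ} (hn : 1 ≤ n) (g : Fin n → Fin n → ℝ) {a b : Fin n} (hab : a ≠ b) :
    (∑ σ : Equiv.Perm (Fin n), g (σ a) (σ b)) * ((n : ℝ) * ((n : ℝ) - 1))
      = (n.factorial : ℝ) * ∑ i : Fin n, ∑ j : Fin n, (if i ≠ j then g i j else 0) := by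
  classical
  set c : Fin n → Fin n → ℕ :=
    fun i j => (univ.filter fun σ : Equiv.Perm (Fin n) => σ a = i ∧ σ b = j).card with hc_def
  have hc0 : ∀ i, c i i = 0 := by
    intro i
    rw [hc_def, Finset.card_eq_zero, Finset.filter_eq_empty_iff]
    rintro σ - ⟨h1, h2⟩
    exact hab (σ.injective (h1.trans h2.symm))
  have expand : ∀ g' : Fin n → Fin n → ℝ,
      (∑ σ : Equiv.Perm (Fin n), g' (σ a) (σ b))
        = ∑ i : Fin n, ∑ j : Fin n, (c i j : ℝ) * g' i j := by
    intro g'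
    have : ∀ σ : Equiv.Perm (Fin n), g' (σ a) (σ b)
        = ∑ i : Fin n, ∑ j : Fin n, if i = σ a ∧ j = σ b then g' i j else 0 := by
      intro σ
      simp [ite_and, Finset.sum_ite_eq']
    simp_rw [this]
    rw [Finset.sum_comm]
    refine Finset.sum_congr rfl fun i _ => ?_
    rw [Finset.sum_comm]
    refine Finset.sum_congr rfl fun j _ => ?_
    have : ∀ σ : Equiv.Perm (Fin n), (if i = σ a ∧ j = σ b then g' i j else 0)
        = if σ a = i ∧ σ b = j then g' i j else 0 := by
      intro σ
      congr 1
      simp [eq_comm]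
    simp_rw [this]
    rw [Finset.sum_ite, Finset.sum_const, Finset.sum_const_zero, add_zero, hc_def]
    simp [mul_comm]
  -- all off-diagonal c's equal c a b
  have hcc : ∀ i j, i ≠ j → c i j = c a b := fun i j hij => fib_card_eq hij hab
  have sum_ones : ∑ i : Fin n, ∑ j : Fin n, (if i ≠ j then (1:ℝ) else 0)
      = (n : ℝ) * ((n : ℝ) - 1) := by
    have : ∀ i : Fin n, ∑ j : Fin n, (if i ≠ j then (1:ℝ) else 0) = (n : ℝ) - 1 := by
      intro i
      rw [Finset.sum_ite, Finset.sum_const, Finset.sum_const_zero, add_zero]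
      have hcard : (univ.filter fun j : Fin n => i ≠ j).card = n - 1 := by
        have : (fun j : Fin n => i ≠ j) = fun j : Fin n => j ≠ i := by
          funext j; simp [ne_comm]
        simp only [this]
        rw [Finset.filter_ne' univ i, Finset.card_erase_of_mem (mem_univ i)]
        simp
      rw [hcard, nsmul_eq_mul, mul_one, Nat.cast_sub hn]
      simp
    simp_rw [this]
    rw [Finset.sum_const, Finset.card_univ, Fintype.card_fin]
    simp [mul_comm]
  have fact_eq : (n.factorial : ℝ) = (c a b : ℝ) * ((n : ℝ) * ((n : ℝ) - 1)) := by
    have h1 := expand (fun _ _ => (1:ℝ))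
    simp only [mul_one] at h1
    have h2 : (∑ _σ : Equiv.Perm (Fin n), (1:ℝ)) = (n.factorial : ℝ) := by
      rw [Finset.sum_const, Finset.card_univ, Fintype.card_perm, Fintype.card_fin]
      simp
    have h3 : ∑ i : Fin n, ∑ j : Fin n, (c i j : ℝ)
        = (c a b : ℝ) * ∑ i : Fin n, ∑ j : Fin n, (if i ≠ j then (1:ℝ) else 0) := by
      rw [Finset.mul_sum]
      refine Finset.sum_congr rfl fun i _ => ?_
      rw [Finset.mul_sum]
      refine Finset.sum_congr rfl fun j _ => ?_
      by_cases hij : i = j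
      · simp [hij, hc0]
      · rw [hcc i j hij, if_pos hij, mul_one]
    rw [← h2, h1, h3, sum_ones]
  have main : (∑ σ : Equiv.Perm (Fin n), g (σ a) (σ b))
      = (c a b : ℝ) * ∑ i : Fin n, ∑ j : Fin n, (if i ≠ j then g i j else 0) := by
    rw [expand g, Finset.mul_sum]
    refine Finset.sum_congr rfl fun i _ => ?_
    rw [Finset.mul_sum]
    refine Finset.sum_congr rfl fun j _ => ?_
    by_cases hij : i = j
    · simp [hij, hc0]
    · rw [hcc i j hij, if_pos hij]
  rw [main, fact_eq]
  ring


set_option maxHeartbeats 2000000 in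
theorem tail_bound
    {Z : Type*} [MeasurableSpace Z]
    (L : Z → Z → ℝ)
    (hLmeas : Measurable (Function.uncurry L))
    (hL0 : ∀ z z', 0 ≤ L z z') (hL1 : ∀ z z', L z z' ≤ 1)
    (P : Measure Z) [IsProbabilityMeasure P]
    (n : ℕ) (hn : 2 ≤ n) (m : ℕ) (hm : 1 ≤ m) (hmn : 2 * m ≤ n)
    (t : ℝ) (ht : 0 ≤ t) :
    (Measure.pi fun _ : Fin n => P)
      {S : Fin n → Z | t ≤ (∫ z, ∫ z', L z z' ∂P ∂P)
          - (1 / ((n : ℝ) * ((n : ℝ) - 1))) *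
              ∑ i : Fin n, ∑ j : Fin n, (if i ≠ j then L (S i) (S j) else 0)}
      ≤ ENNReal.ofReal (Real.exp (-(2 * (m : ℝ) * t ^ 2))) := by
  classical
  set μn : Measure (Fin n → Z) := Measure.pi fun _ : Fin n => P with hμn
  haveI : IsProbabilityMeasure μn := by rw [hμn]; infer_instance
  set Rexp : ℝ := ∫ z, ∫ z', L z z' ∂P ∂P with hRexp_def
  set D : (Fin n → Z) → ℝ :=
    fun S => ∑ i : Fin n, ∑ j : Fin n, (if i ≠ j then L (S i) (S j) else 0) with hD_def
  set Y : (Fin n → Z) → ℝ :=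
    fun S => Rexp - (1 / ((n : ℝ) * ((n : ℝ) - 1))) * D S with hY_def
  show μn {S | t ≤ Y S} ≤ ENNReal.ofReal (Real.exp (-(2 * (m : ℝ) * t ^ 2)))
  -- basic positivity facts
  have hn1 : (1:ℝ) ≤ (n:ℝ) - 1 := by
    have : (2:ℝ) ≤ (n:ℝ) := by exact_mod_cast hn
    linarith
  have hnn : (0:ℝ) < (n : ℝ) * ((n : ℝ) - 1) := by positivity
  have hmr : (0:ℝ) < (m:ℝ) := by exact_mod_cast hm
  set s : ℝ := 4 * (m:ℝ) * t with hs_def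
  have hs : 0 ≤ s := by rw [hs_def]; positivity
  clear_value s
  have hfact : (0:ℝ) < (n.factorial : ℝ) := by exact_mod_cast n.factorial_pos
  -- measurability of coordinate pairs
  have hpair : ∀ i j : Fin n, Measurable fun S : Fin n → Z => L (S i) (S j) := by
    intro i j
    change Measurable fun S : Fin n → Z => Function.uncurry L (S i, S j)
    exact hLmeas.comp ((measurable_pi_apply i).prodMk (measurable_pi_apply j))
  have hD_meas : Measurable D := by
    apply Finset.measurable_sum
    intro i _
    apply Finset.measurable_sum
    intro j _
    by_cases hij : i = j
    · simp [hij]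
    · simpa [if_pos, hij] using hpair i j
  have hY_meas : Measurable Y := measurable_const.sub (hD_meas.const_mul _)
  have hD0 : ∀ S, 0 ≤ D S :=
    fun S => Finset.sum_nonneg fun i _ => Finset.sum_nonneg fun j _ => by
      by_cases hij : i = j <;> simp [hij, hL0]
  clear_value D Y
  -- bounds on Rexp and D
  have hinner_meas : StronglyMeasurable fun z => ∫ z', L z z' ∂P :=
    hLmeas.stronglyMeasurable.integral_prod_right'
  have hLz_meas : ∀ z, Measurable fun z' => L z z' := fun z =>
    hLmeas.comp measurable_prodMk_left
  have hinner0 : ∀ z, 0 ≤ ∫ z', L z z' ∂P := fun z => integral_nonneg (hL0 z)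
  have hinner1 : ∀ z, (∫ z', L z z' ∂P) ≤ 1 := by
    intro z
    calc (∫ z', L z z' ∂P) ≤ ∫ _z', (1:ℝ) ∂P :=
          integral_mono (bdd_integrable (hLz_meas z).aestronglyMeasurable (hL0 z) (hL1 z))
            (integrable_const 1) (hL1 z)
      _ = 1 := by simp
  have hRexp0 : 0 ≤ Rexp := integral_nonneg hinner0
  have hRexp1 : Rexp ≤ 1 := by
    rw [hRexp_def]
    calc (∫ z, ∫ z', L z z' ∂P ∂P) ≤ ∫ _z, (1:ℝ) ∂P :=
          integral_mono (bdd_integrable hinner_meas.aestronglyMeasurable hinner0 hinner1)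
            (integrable_const 1) hinner1
      _ = 1 := by simp
  clear_value Rexp
  have hY1 : ∀ S, Y S ≤ 1 := by
    intro S
    have : 0 ≤ (1 / ((n : ℝ) * ((n : ℝ) - 1))) * D S :=
      mul_nonneg (by positivity) (hD0 S)
    simp only [hY_def]
    linarith
  -- integrability of exp (s * Y)
  have hYint : Integrable (fun S => exp (s * Y S)) μn := by
    refine bdd_integrable ((hY_meas.const_mul s).exp).aestronglyMeasurable (a := 0) (b := exp s)
      (fun S => (exp_pos _).le) (fun S => ?_)
    apply exp_le_exp.2
    nlinarith [hY1 S]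
  -- Chernoff
  have chern := ProbabilityTheory.measure_ge_le_exp_mul_mgf (X := Y) (μ := μn) (t := s) t hs hYint
  -- block structure
  set r : ℕ := n - 2 * m with hr_def
  have hcard : Fintype.card ((Fin m ⊕ Fin m) ⊕ Fin r) = Fintype.card (Fin n) := by
    simp only [Fintype.card_sum, Fintype.card_fin]
    omega
  set e : ((Fin m ⊕ Fin m) ⊕ Fin r) ≃ Fin n := Fintype.equivOfCardEq hcard with he_def
  set a : Fin m → Fin n := fun k => e (Sum.inl (Sum.inl k)) with ha_def
  set b : Fin m → Fin n := fun k => e (Sum.inl (Sum.inr k)) with hb_def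
  have hab : ∀ k, a k ≠ b k := by
    intro k h
    simpa using e.injective h
  clear_value r e a b
  set V : (Fin n → Z) → ℝ :=
    fun S => (1/(m:ℝ)) * ∑ k : Fin m, L (S (a k)) (S (b k)) with hV_def
  set W : (Fin n → Z) → ℝ := fun S => Rexp - V S with hW_def
  have hV_meas : Measurable V :=
    (Finset.measurable_sum _ fun k _ => hpair (a k) (b k)).const_mul _
  have hW_meas : Measurable W := measurable_const.sub hV_meas
  have hV0 : ∀ S, 0 ≤ V S := fun S => mul_nonneg (by positivity)
    (Finset.sum_nonneg fun k _ => hL0 _ _)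
  have hW1 : ∀ S, W S ≤ 1 := by
    intro S
    have := hV0 S
    simp only [hW_def]
    linarith
  have hWint : Integrable (fun S => exp (s * W S)) μn := by
    refine bdd_integrable ((hW_meas.const_mul s).exp).aestronglyMeasurable (a := 0) (b := exp s)
      (fun S => (exp_pos _).le) (fun S => ?_)
    apply exp_le_exp.2
    nlinarith [hW1 S]
  clear_value V W
  -- Step 1 : pointwise symmetrization via convexity of exp
  have step1 : ∀ S : Fin n → Z, exp (s * Y S)
      ≤ ∑ σ : Equiv.Perm (Fin n), ((n.factorial : ℝ))⁻¹ * exp (s * W (fun i => S (σ i))) := by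
    intro S
    have hVsum : ∑ σ : Equiv.Perm (Fin n), V (fun i => S (σ i))
        = (n.factorial : ℝ) * D S / ((n : ℝ) * ((n : ℝ) - 1)) := by
      have hterm : ∀ k : Fin m, (∑ σ : Equiv.Perm (Fin n), L (S (σ (a k))) (S (σ (b k))))
          = (n.factorial : ℝ) * D S / ((n : ℝ) * ((n : ℝ) - 1)) := by
        intro k
        rw [eq_div_iff hnn.ne', hD_def]
        exact sum_perm_pair (by omega) (fun i j => L (S i) (S j)) (hab k)
      calc ∑ σ : Equiv.Perm (Fin n), V (fun i => S (σ i))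
          = (1/(m:ℝ)) * ∑ σ : Equiv.Perm (Fin n),
              ∑ k : Fin m, L (S (σ (a k))) (S (σ (b k))) := by
            simp only [hV_def]
            rw [Finset.mul_sum]
        _ = (1/(m:ℝ)) * ∑ k : Fin m,
              ∑ σ : Equiv.Perm (Fin n), L (S (σ (a k))) (S (σ (b k))) := by
            rw [Finset.sum_comm]
        _ = (1/(m:ℝ)) * ∑ _k : Fin m,
              (n.factorial : ℝ) * D S / ((n : ℝ) * ((n : ℝ) - 1)) := by
            rw [Finset.sum_congr rfl fun k _ => hterm k]
        _ = (n.factorial : ℝ) * D S / ((n : ℝ) * ((n : ℝ) - 1)) := by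
            rw [Finset.sum_const, card_univ, Fintype.card_fin, nsmul_eq_mul]
            field_simp
    have hWsum : ∑ σ : Equiv.Perm (Fin n),
        ((n.factorial : ℝ))⁻¹ • (s * W (fun i => S (σ i))) = s * Y S := by
      simp only [hW_def, smul_eq_mul]
      have expand : ∀ σ : Equiv.Perm (Fin n),
          (n.factorial : ℝ)⁻¹ * (s * (Rexp - V (fun i => S (σ i))))
            = (n.factorial : ℝ)⁻¹ * s * Rexp
              - (n.factorial : ℝ)⁻¹ * s * V (fun i => S (σ i)) := by
        intro σ; ring
      rw [Finset.sum_congr rfl fun σ _ => expand σ, Finset.sum_sub_distrib,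
        Finset.sum_const, ← Finset.mul_sum, hVsum, card_univ, Fintype.card_perm,
        Fintype.card_fin, nsmul_eq_mul]
      simp only [hY_def]
      field_simp
    have conv := convexOn_exp.map_sum_le (t := (univ : Finset (Equiv.Perm (Fin n))))
        (w := fun _ => ((n.factorial : ℝ))⁻¹)
        (p := fun σ => s * W (fun i => S (σ i)))
        (fun _ _ => by positivity)
        (by
          rw [Finset.sum_const, card_univ, Fintype.card_perm, Fintype.card_fin, nsmul_eq_mul]
          field_simp)
        (fun _ _ => Set.mem_univ _)
    rw [hWsum] at conv
    exact conv
  -- Step 2 : integrate the symmetrization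
  have hWσint : ∀ σ : Equiv.Perm (Fin n),
      Integrable (fun S : Fin n → Z => exp (s * W (fun i => S (σ i)))) μn := by
    intro σ
    have hmeasσ : Measurable fun S : Fin n → Z => (fun i => S (σ i)) :=
      measurable_pi_lambda _ fun i => measurable_pi_apply (σ i)
    refine bdd_integrable (((hW_meas.comp hmeasσ).const_mul s).exp).aestronglyMeasurable
      (a := 0) (b := exp s) (fun S => (exp_pos _).le) (fun S => ?_)
    apply exp_le_exp.2
    nlinarith [hW1 (fun i => S (σ i))]
  have hmp : ∀ σ : Equiv.Perm (Fin n),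
      (∫ S, exp (s * W (fun i => S (σ i))) ∂μn) = ∫ S, exp (s * W S) ∂μn := by
    intro σ
    simp only [hμn]
    have hpcl : ∀ S : Fin n → Z,
        ((MeasurableEquiv.piCongrLeft (fun _ : Fin n => Z) σ.symm) S) = fun i => S (σ i) := by
      intro S; funext i
      rw [MeasurableEquiv.coe_piCongrLeft]
      have h2 := Equiv.piCongrLeft_apply_apply (fun _ : Fin n => Z) σ.symm S (σ i)
      rw [Equiv.symm_apply_apply] at h2
      exact h2
    calc (∫ S, exp (s * W (fun i => S (σ i))) ∂μn)
        = ∫ S, exp (s * W ((MeasurableEquiv.piCongrLeft (fun _ : Fin n => Z) σ.symm) S)) ∂μn := by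
          refine integral_congr_ae (Filter.EventuallyEq.of_eq (funext fun S => ?_))
          rw [hpcl S]
      _ = ∫ S, exp (s * W S) ∂(Measure.pi fun _ : Fin n => P) :=
          (measurePreserving_piCongrLeft (fun _ : Fin n => P) σ.symm).integral_comp'
            (fun S => exp (s * W S))
  have step2 : (∫ S, exp (s * Y S) ∂μn) ≤ ∫ S, exp (s * W S) ∂μn := by
    have int_rhs : Integrable (fun S : Fin n → Z => ∑ σ : Equiv.Perm (Fin n),
        ((n.factorial : ℝ))⁻¹ * exp (s * W (fun i => S (σ i)))) μn :=
      integrable_finset_sum _ fun σ _ => (hWσint σ).const_mul _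
    calc (∫ S, exp (s * Y S) ∂μn)
        ≤ ∫ S, ∑ σ : Equiv.Perm (Fin n),
            ((n.factorial : ℝ))⁻¹ * exp (s * W (fun i => S (σ i))) ∂μn :=
          integral_mono hYint int_rhs step1
      _ = ∑ σ : Equiv.Perm (Fin n),
            ((n.factorial : ℝ))⁻¹ * ∫ S, exp (s * W (fun i => S (σ i))) ∂μn := by
          rw [integral_finset_sum _ fun σ _ => (hWσint σ).const_mul _]
          exact Finset.sum_congr rfl fun σ _ => integral_const_mul _ _
      _ = ∑ _σ : Equiv.Perm (Fin n), ((n.factorial : ℝ))⁻¹ * ∫ S, exp (s * W S) ∂μn :=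
          Finset.sum_congr rfl fun σ _ => by rw [hmp σ]
      _ = ∫ S, exp (s * W S) ∂μn := by
          rw [Finset.sum_const, card_univ, Fintype.card_perm, Fintype.card_fin, nsmul_eq_mul]
          field_simp
  -- Step 3 : factorization over independent blocks
  set c : ℝ := s / m with hc_def
  have hc0' : 0 ≤ c := by positivity
  set f2 : Z → Z → ℝ := fun z z' => exp (c * (Rexp - L z z')) with hf2_def
  have hf2meas : Measurable (Function.uncurry f2) := by
    change Measurable fun p : Z × Z => exp (c * (Rexp - Function.uncurry L p))
    exact (((measurable_const.sub hLmeas).const_mul c).exp)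
  have hf20 : ∀ z z', 0 ≤ f2 z z' := fun z z' => (exp_pos _).le
  have hf2B : ∀ z z', f2 z z' ≤ exp c := by
    intro z z'
    apply exp_le_exp.2
    nlinarith [hL0 z z', hRexp1]
  have hprod_pt : ∀ S : Fin n → Z,
      exp (s * W S) = ∏ k : Fin m, f2 (S (a k)) (S (b k)) := by
    intro S
    simp only [hf2_def]
    rw [← Real.exp_sum]
    congr 1
    have hsum : ∑ k : Fin m, c * (Rexp - L (S (a k)) (S (b k)))
        = c * ((m:ℝ) * Rexp - ∑ k : Fin m, L (S (a k)) (S (b k))) := by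
      rw [← Finset.mul_sum, Finset.sum_sub_distrib, Finset.sum_const, card_univ,
        Fintype.card_fin, nsmul_eq_mul]
    rw [hsum]
    simp only [hW_def, hV_def, hc_def]
    field_simp
  have step3 : (∫ S, exp (s * W S) ∂μn) = (∫ z, ∫ z', f2 z z' ∂P ∂P) ^ m := by
    have hrw : (∫ S, exp (s * W S) ∂μn) = ∫ S, ∏ k : Fin m, f2 (S (a k)) (S (b k)) ∂μn :=
      integral_congr_ae (Filter.EventuallyEq.of_eq (funext fun S => hprod_pt S))
    rw [hrw, hμn]
    have hcomp := (measurePreserving_piCongrLeft (fun _ : Fin n => P) e).integral_comp'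
      (fun S => ∏ k : Fin m, f2 (S (a k)) (S (b k)))
    have hpt : ∀ T : ((Fin m ⊕ Fin m) ⊕ Fin r) → Z,
        (∏ k : Fin m, f2 (((MeasurableEquiv.piCongrLeft (fun _ : Fin n => Z) e) T) (a k))
            (((MeasurableEquiv.piCongrLeft (fun _ : Fin n => Z) e) T) (b k)))
          = ∏ k : Fin m, f2 (T (Sum.inl (Sum.inl k))) (T (Sum.inl (Sum.inr k))) := by
      intro T
      refine Finset.prod_congr rfl fun k _ => ?_
      have h1 : ((MeasurableEquiv.piCongrLeft (fun _ : Fin n => Z) e) T) (a k)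
          = T (Sum.inl (Sum.inl k)) := by
        rw [ha_def, MeasurableEquiv.coe_piCongrLeft]
        exact Equiv.piCongrLeft_apply_apply (P := fun _ : Fin n => Z) (e := e) T
          (Sum.inl (Sum.inl k))
      have h2 : ((MeasurableEquiv.piCongrLeft (fun _ : Fin n => Z) e) T) (b k)
          = T (Sum.inl (Sum.inr k)) := by
        rw [hb_def, MeasurableEquiv.coe_piCongrLeft]
        exact Equiv.piCongrLeft_apply_apply (P := fun _ : Fin n => Z) (e := e) T
          (Sum.inl (Sum.inr k))
      rw [h1, h2]
    exact hcomp.symm.trans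
      ((integral_congr_ae (Filter.EventuallyEq.of_eq (funext fun T => hpt T))).trans
        (prod_pairs P m r f2 hf2meas hf20 hf2B))
  -- Step 4 : Hoeffding's lemma on each block
  have hLprod_int : Integrable (fun ω : Z × Z => L ω.1 ω.2) (P.prod P) :=
    bdd_integrable hLmeas.aestronglyMeasurable (fun ω => hL0 _ _) (fun ω => hL1 _ _)
  have hRR : (∫ ω : Z × Z, L ω.1 ω.2 ∂(P.prod P)) = Rexp := by
    rw [integral_prod _ hLprod_int, hRexp_def]
  have step4 : (∫ z, ∫ z', f2 z z' ∂P ∂P) ≤ exp (c ^ 2 / 8) := by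
    have h := hoeff_mgf (P.prod P) (fun ω : Z × Z => L ω.1 ω.2) hLmeas
      (fun ω => hL0 _ _) (fun ω => hL1 _ _) c hc0'
    rw [hRR] at h
    have hint2 : Integrable (fun ω : Z × Z => exp (c * (Rexp - L ω.1 ω.2))) (P.prod P) := by
      refine bdd_integrable ((((measurable_const.sub hLmeas).const_mul c).exp)).aestronglyMeasurable
        (a := 0) (b := exp c) (fun ω => (exp_pos _).le) (fun ω => ?_)
      apply exp_le_exp.2
      nlinarith [hL0 ω.1 ω.2, hRexp1]
    have heq : (∫ z, ∫ z', f2 z z' ∂P ∂P)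
        = ∫ ω : Z × Z, exp (c * (Rexp - L ω.1 ω.2)) ∂(P.prod P) :=
      (integral_prod _ hint2).symm
    rw [heq]
    exact h
  have hf2nonneg : 0 ≤ ∫ z, ∫ z', f2 z z' ∂P ∂P :=
    integral_nonneg fun z => integral_nonneg fun z' => hf20 _ _
  -- put together : mgf bound
  have hmgf : ProbabilityTheory.mgf Y μn s ≤ exp (s ^ 2 / (8 * (m:ℝ))) := by
    calc ProbabilityTheory.mgf Y μn s = ∫ S, exp (s * Y S) ∂μn := rfl
      _ ≤ ∫ S, exp (s * W S) ∂μn := step2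
      _ = (∫ z, ∫ z', f2 z z' ∂P ∂P) ^ m := step3
      _ ≤ (exp (c ^ 2 / 8)) ^ m := pow_le_pow_left₀ hf2nonneg step4 m
      _ = exp ((m:ℝ) * (c ^ 2 / 8)) := by
          rw [← Real.exp_nat_mul]
      _ = exp (s ^ 2 / (8 * (m:ℝ))) := by
          congr 1
          rw [hc_def]
          field_simp
  -- final arithmetic
  have harith : exp (-s * t) * exp (s ^ 2 / (8 * (m:ℝ))) = exp (-(2 * (m : ℝ) * t ^ 2)) := by
    rw [← Real.exp_add]
    congr 1
    rw [hs_def]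
    field_simp
    ring
  rw [ENNReal.le_ofReal_iff_toReal_le (measure_ne_top _ _) (exp_pos _).le]
  calc (μn {S | t ≤ Y S}).toReal ≤ exp (-s * t) * ProbabilityTheory.mgf Y μn s := chern
    _ ≤ exp (-s * t) * exp (s ^ 2 / (8 * (m:ℝ))) :=
        mul_le_mul_of_nonneg_left hmgf (exp_pos _).le
    _ = exp (-(2 * (m : ℝ) * t ^ 2)) := harith


/-- For `S ~ P^⊗n` (i.i.d., `n ≥ 2`) and any `δ ∈ (0,1)`, with probability at
least `1 - δ` over the draw of `S`, we have
`R_exp(P) ≤ R_emp(S) + sqrt (2 * log (1/δ) / n)`, where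
`R_emp(S) = (1/(n(n-1))) ∑_{i ≠ j} L (S i) (S j)` and
`R_exp(P) = ∫∫ L dP dP`, for a measurable symmetric loss `L` with values in `[0,1]`. -/
theorem stmt0
    {Z : Type*} [MeasurableSpace Z]
    (L : Z → Z → ℝ)
    (hLmeas : Measurable (Function.uncurry L))
    (hL0 : ∀ z z', 0 ≤ L z z') (hL1 : ∀ z z', L z z' ≤ 1)
    (hLsym : ∀ z z', L z z' = L z' z)
    (P : Measure Z) [IsProbabilityMeasure P]
    (n : ℕ) (hn : 2 ≤ n)
    (δ : ℝ) (hδ0 : 0 < δ) (hδ1 : δ < 1) :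
    ENNReal.ofReal (1 - δ) ≤
      Measure.pi (fun _ : Fin n => P)
        {S : Fin n → Z |
          (∫ z, ∫ z', L z z' ∂P ∂P) ≤
            (1 / ((n : ℝ) * ((n : ℝ) - 1))) *
              ∑ i : Fin n, ∑ j : Fin n, (if i ≠ j then L (S i) (S j) else 0)
            + Real.sqrt (2 * Real.log (1 / δ) / (n : ℝ)) } := by
  classical
  set μn : Measure (Fin n → Z) := Measure.pi fun _ : Fin n => P with hμn
  haveI : IsProbabilityMeasure μn := by rw [hμn]; infer_instance
  set t : ℝ := Real.sqrt (2 * Real.log (1 / δ) / (n : ℝ)) with ht_def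
  have ht0 : 0 ≤ t := Real.sqrt_nonneg _
  set m : ℕ := n / 2 with hm_def
  have hm : 1 ≤ m := by omega
  have hmn : 2 * m ≤ n := by omega
  have h4m : n ≤ 4 * m := by omega
  have tb := tail_bound L hLmeas hL0 hL1 P n hn m hm hmn t ht0
  -- log facts
  have hδinv : (1:ℝ) < 1 / δ := by
    rw [lt_div_iff₀ hδ0]; linarith
  have hlog : 0 < Real.log (1 / δ) := Real.log_pos hδinv
  have hn0 : (0:ℝ) < (n:ℝ) := by positivity
  have ht2 : t ^ 2 = 2 * Real.log (1 / δ) / (n : ℝ) := by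
    rw [ht_def, Real.sq_sqrt (by positivity)]
  -- the exponential bound is at most δ
  have hexp : Real.exp (-(2 * (m : ℝ) * t ^ 2)) ≤ δ := by
    have hlm : Real.log (1 / δ) ≤ 2 * (m : ℝ) * t ^ 2 := by
      have key : 2 * (m:ℝ) * (2 * Real.log (1/δ) / (n:ℝ))
          = 4 * (m:ℝ) * Real.log (1/δ) / (n:ℝ) := by ring
      have h4m' : (n:ℝ) ≤ 4 * (m:ℝ) := by exact_mod_cast h4m
      rw [ht2, key, le_div_iff₀ hn0]
      nlinarith [hlog.le]
    calc Real.exp (-(2 * (m : ℝ) * t ^ 2)) ≤ Real.exp (-(Real.log (1 / δ))) :=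
          Real.exp_le_exp.2 (by linarith)
      _ = δ := by
          rw [Real.exp_neg, Real.exp_log (by positivity : (0:ℝ) < 1 / δ)]
          simp
  -- measurability of the empirical risk
  have hpair : ∀ i j : Fin n, Measurable fun S : Fin n → Z => L (S i) (S j) := by
    intro i j
    change Measurable fun S : Fin n → Z => Function.uncurry L (S i, S j)
    exact hLmeas.comp ((measurable_pi_apply i).prodMk (measurable_pi_apply j))
  have hD_meas : Measurable fun S : Fin n → Z =>
      ∑ i : Fin n, ∑ j : Fin n, (if i ≠ j then L (S i) (S j) else 0) := by
    apply Finset.measurable_sum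
    intro i _
    apply Finset.measurable_sum
    intro j _
    by_cases hij : i = j
    · simp [hij]
    · simpa [if_pos, hij] using hpair i j
  set G : Set (Fin n → Z) := {S : Fin n → Z |
      (∫ z, ∫ z', L z z' ∂P ∂P) ≤
        (1 / ((n : ℝ) * ((n : ℝ) - 1))) *
          ∑ i : Fin n, ∑ j : Fin n, (if i ≠ j then L (S i) (S j) else 0) + t} with hG_def
  show ENNReal.ofReal (1 - δ) ≤ μn G
  have hG_meas : MeasurableSet G := by
    rw [hG_def]
    exact measurableSet_le measurable_const ((hD_meas.const_mul _).add_const t)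
  have hsub : Gᶜ ⊆ {S : Fin n → Z | t ≤ (∫ z, ∫ z', L z z' ∂P ∂P)
      - (1 / ((n : ℝ) * ((n : ℝ) - 1))) *
          ∑ i : Fin n, ∑ j : Fin n, (if i ≠ j then L (S i) (S j) else 0)} := by
    intro S hS
    simp only [hG_def, Set.mem_compl_iff, Set.mem_setOf_eq, not_le] at hS
    simp only [Set.mem_setOf_eq]
    linarith
  have hcompl : μn Gᶜ ≤ ENNReal.ofReal δ :=
    le_trans (measure_mono hsub) (tb.trans (ENNReal.ofReal_le_ofReal hexp))
  have hGc : μn Gᶜ = 1 - μn G := prob_compl_eq_one_sub hG_meas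
  rw [hGc] at hcompl
  have h1 : (1 : ENNReal) ≤ ENNReal.ofReal δ + μn G := tsub_le_iff_right.mp hcompl
  have h2 : ENNReal.ofReal (1 - δ) = 1 - ENNReal.ofReal δ := by
    rw [ENNReal.ofReal_sub _ hδ0.le, ENNReal.ofReal_one]
  rw [h2]
  exact tsub_le_iff_right.mpr (by rwa [add_comm])
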